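/- Quadratic convergence of the Schulz iteration for matrices of power series: let R be a commutative ring, m ≥ 1, and A an m×m matrix of formal power series in z over R whose matrix of constant coefficients is invertible over R. Then A is invertible as a matrix over the power series ring, and for every k ≥ 0 and every m×m matrix U of power series with U ≡ A^{-1} mod z^{k+1} entrywise, the iterate U + U·(Id − A·U) satisfies U + U·(Id − A·U) ≡ A^{-1} mod z^{2k+2} entrywise. -/

import Mathlib

/-- **Quadratic convergence of the Schulz iteration for matrices of power series.**  If the
matrix of constant coefficients of `A` is invertible over `R`, then `A` is invertible over
the ring of matrices of power series, and any `U` agreeing with `A⁻¹` in all degrees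
`n ≤ k` entrywise yields an iterate `U + U ⬝ (Id - A ⬝ U)` agreeing with `A⁻¹` in all
degrees `n ≤ 2k + 1` entrywise. -/
theorem schulz_iteration_quadratic {R : Type*} [CommRing R] {m : ℕ} (hm : 1 ≤ m)
    (A : Matrix (Fin m) (Fin m) (PowerSeries R))
    (hA : IsUnit (A.map (PowerSeries.constantCoeff : PowerSeries R →+* R))) (k : ℕ) :
    IsUnit A ∧
      ∀ U : Matrix (Fin m) (Fin m) (PowerSeries R),
        (∀ i j, ∀ n ≤ k,
          PowerSeries.coeff n (U i j) = PowerSeries.coeff n (Ring.inverse A i j)) →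
        ∀ i j, ∀ n ≤ 2 * k + 1,
          PowerSeries.coeff n ((U + U * (1 - A * U)) i j) =
            PowerSeries.coeff n (Ring.inverse A i j) := by
  have hdet : IsUnit A.det := by
    rw [PowerSeries.isUnit_iff_constantCoeff, RingHom.map_det]
    exact (Matrix.isUnit_iff_isUnit_det _).mp hA
  have hAu : IsUnit A := (Matrix.isUnit_iff_isUnit_det _).mpr hdet
  refine ⟨hAu, ?_⟩
  intro U hU i j n hn
  set B := Ring.inverse A with hB
  have hBA : B * A = 1 := Ring.inverse_mul_cancel A hAu
  have hAB : A * B = 1 := Ring.mul_inverse_cancel A hAu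
  have key : B - (U + U * (1 - A * U)) = (B - U) * A * (B - U) := by
    have e1 : (B - U) * A = 1 - U * A := by rw [sub_mul, hBA]
    rw [e1, sub_mul, one_mul, mul_sub (U * A) B U, mul_assoc U A B, hAB, mul_one, mul_assoc U A U,
      mul_sub U (1 : Matrix (Fin m) (Fin m) (PowerSeries R)) (A * U), mul_one]
    abel
  have hE : ∀ i j, (PowerSeries.X : PowerSeries R) ^ (k + 1) ∣ (B - U) i j := by
    intro i j
    rw [PowerSeries.X_pow_dvd_iff]
    intro p hp
    have := hU i j p (Nat.lt_succ_iff.mp hp)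
    simp [Matrix.sub_apply, this]
  have hEA : ∀ i j, (PowerSeries.X : PowerSeries R) ^ (k + 1) ∣ ((B - U) * A) i j := by
    intro i j
    rw [Matrix.mul_apply]
    exact Finset.dvd_sum fun p _ => (hE i p).mul_right _
  have hfin : (PowerSeries.X : PowerSeries R) ^ (2 * k + 2) ∣
      ((B - U) * A * (B - U)) i j := by
    rw [Matrix.mul_apply]
    refine Finset.dvd_sum fun p _ => ?_
    have : (PowerSeries.X : PowerSeries R) ^ (2 * k + 2) =
        PowerSeries.X ^ (k + 1) * PowerSeries.X ^ (k + 1) := by ring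
    rw [this]
    exact mul_dvd_mul (hEA i p) (hE p j)
  have hz : (PowerSeries.coeff (R := R) n) (((B - U) * A * (B - U)) i j) = 0 := by
    rw [PowerSeries.X_pow_dvd_iff] at hfin
    exact hfin n (by omega)
  rw [← key, Matrix.sub_apply, map_sub] at hz
  exact (sub_eq_zero.mp hz).symm
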